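/- Let G be a finite simple graph, v a vertex of G, and V₁, V₂ ⊆ V(G). Then G is a (v, G[V₁], G[V₂])-pseudo-cograph if and only if the complement Ḡ of G is a (v, Ḡ[V₁], Ḡ[V₂])-pseudo-cograph. In particular, G is a pseudo-cograph if and only if Ḡ is a pseudo-cograph. -/
import Mathlib


/-- A graph is P₄-free (i.e., a cograph) if it has no induced subgraph
isomorphic to the path on four vertices. -/
def IsP4Free {V : Type} (G : SimpleGraph V) : Prop :=
  ¬ Nonempty (SimpleGraph.pathGraph 4 ↪g G)

/-- `G` is a `(v, G[V1], G[V2])`-pseudo-cograph. -/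
def IsPseudoCographAt {V : Type} (G : SimpleGraph V) (v : V) (V1 V2 : Set V) : Prop :=
  V1 ∪ V2 = Set.univ ∧ V1 ∩ V2 = {v} ∧ 1 < V1.ncard ∧ 1 < V2.ncard ∧
  IsP4Free (G.induce V1) ∧ IsP4Free (G.induce V2) ∧
  ((∀ x ∈ V1 \ {v}, ∀ y ∈ V2 \ {v}, G.Adj x y) ∨
   (∀ x ∈ V1 \ {v}, ∀ y ∈ V2 \ {v}, ¬ G.Adj x y))

/-- `G` is a pseudo-cograph. -/
def IsPseudoCograph {V : Type} (G : SimpleGraph V) : Prop :=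
  Nat.card V ≤ 2 ∨ ∃ (v : V) (V1 V2 : Set V), IsPseudoCographAt G v V1 V2

private lemma p4_self_compl : ∀ a b : Fin 4, (SimpleGraph.pathGraph 4).Adj a b ↔
    ((![2,0,3,1] : Fin 4 → Fin 4) a ≠ ![2,0,3,1] b ∧
      ¬(SimpleGraph.pathGraph 4).Adj (![2,0,3,1] a) (![2,0,3,1] b)) := by
  simp only [SimpleGraph.pathGraph, SimpleGraph.hasse_adj, ← Fin.coe_covBy_iff,
    Order.covBy_iff_add_one_eq]
  decide

private lemma sigma_inj : Function.Injective (![2,0,3,1] : Fin 4 → Fin 4) := by decide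

private lemma isP4Free_compl {V : Type} {G : SimpleGraph V} (h : IsP4Free G) :
    IsP4Free Gᶜ := by
  rintro ⟨f⟩
  apply h
  refine ⟨⟨⟨fun a => f (![2,0,3,1] a), f.injective.comp sigma_inj⟩, ?_⟩⟩
  intro a b
  simp only [Function.Embedding.coeFn_mk]
  constructor
  · intro hadj
    rw [p4_self_compl]
    have hne : (![2,0,3,1] : Fin 4 → Fin 4) a ≠ ![2,0,3,1] b :=
      fun e => hadj.ne (congrArg f e)
    refine ⟨hne, fun hp => ?_⟩
    have := f.map_adj_iff.mpr hp
    rw [SimpleGraph.compl_adj _ _ _] at this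
    exact this.2 hadj
  · intro hadj
    rw [p4_self_compl] at hadj
    obtain ⟨hne, hnp⟩ := hadj
    have hne' : f (![2,0,3,1] a) ≠ f (![2,0,3,1] b) := fun e => hne (f.injective e)
    by_contra hG
    exact hnp (f.map_adj_iff.mp ((SimpleGraph.compl_adj _ _ _).mpr ⟨hne', hG⟩))

private lemma induce_compl {V : Type} (G : SimpleGraph V) (s : Set V) :
    Gᶜ.induce s = (G.induce s)ᶜ := by
  ext a b
  simp [SimpleGraph.compl_adj, Subtype.coe_inj, ne_eq]

private lemma aux {V : Type} (G : SimpleGraph V) (v : V) (V1 V2 : Set V)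
    (h : IsPseudoCographAt G v V1 V2) : IsPseudoCographAt Gᶜ v V1 V2 := by
  obtain ⟨h1, h2, h3, h4, h5, h6, h7⟩ := h
  have hne : ∀ x ∈ V1 \ {v}, ∀ y ∈ V2 \ {v}, x ≠ y := by
    rintro x ⟨hx1, hx2⟩ y ⟨hy1, hy2⟩ rfl
    exact hx2 (h2 ▸ Set.mem_inter hx1 hy1)
  refine ⟨h1, h2, h3, h4, ?_, ?_, ?_⟩
  · rw [induce_compl]; exact isP4Free_compl h5
  · rw [induce_compl]; exact isP4Free_compl h6
  · rcases h7 with h7 | h7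
    · right; intro x hx y hy hadj
      exact ((SimpleGraph.compl_adj _ _ _).mp hadj).2 (h7 x hx y hy)
    · left; intro x hx y hy
      exact (SimpleGraph.compl_adj _ _ _).mpr ⟨hne x hx y hy, h7 x hx y hy⟩

private lemma aux_iff {V : Type} (G : SimpleGraph V) (v : V) (V1 V2 : Set V) :
    IsPseudoCographAt G v V1 V2 ↔ IsPseudoCographAt Gᶜ v V1 V2 :=
  ⟨aux G v V1 V2, fun h => by simpa using aux Gᶜ v V1 V2 h⟩

/-- `G` is a `(v, G[V₁], G[V₂])`-pseudo-cograph iff the complement `Gᶜ` is a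
`(v, Gᶜ[V₁], Gᶜ[V₂])`-pseudo-cograph; in particular, `G` is a pseudo-cograph
iff `Gᶜ` is a pseudo-cograph. -/
theorem pseudoCograph_iff_compl_pseudoCograph
    {V : Type} [Fintype V] (G : SimpleGraph V) (v : V) (V1 V2 : Set V) :
    (IsPseudoCographAt G v V1 V2 ↔ IsPseudoCographAt Gᶜ v V1 V2) ∧
      (IsPseudoCograph G ↔ IsPseudoCograph Gᶜ) := by
  refine ⟨aux_iff G v V1 V2, ?_⟩
  unfold IsPseudoCograph
  apply or_congr Iff.rfl
  constructor
  · rintro ⟨w, W1, W2, h⟩; exact ⟨w, W1, W2, (aux_iff G w W1 W2).mp h⟩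
  · rintro ⟨w, W1, W2, h⟩; exact ⟨w, W1, W2, (aux_iff G w W1 W2).mpr h⟩
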